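/- arXiv:2112.09746 — 2 statements merged into one kernel-verified Lean document; each statement's English description precedes it below -/
import Mathlib

section
/- Logarithmic growth of Stirling numbers of the second kind. There exist positive constants c₁ and c₂ such that for every integer p ≥ 1 and every integer q with 1 ≤ q ≤ p, c₁ (p − q) log q ≤ log S(p,q) ≤ c₂ (p − q) log q, where S(p,q) is the Stirling number of the second kind. -/
noncomputable section

/-- Stirling numbers of the second kind: the number of ways to partition a set of `p`
labeled objects into `q` nonempty unlabeled subsets. -/
def stirling2 : ℕ → ℕ → ℕ
  | 0, 0 => 1
  | 0, _ + 1 => 0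
  | _ + 1, 0 => 0
  | p + 1, q + 1 => (q + 1) * stirling2 p (q + 1) + stirling2 p q

lemma stirling2_eq_zero : ∀ p q : ℕ, p < q → stirling2 p q = 0 := by
  intro p
  induction p with
  | zero => intro q h; match q, h with
    | q + 1, _ => rfl
  | succ p ih =>
    intro q h
    match q, h with
    | q + 1, h =>
      show (q + 1) * stirling2 p (q + 1) + stirling2 p q = 0
      rw [ih (q + 1) (by omega), ih q (by omega)]
      simp

lemma stirling2_self : ∀ n : ℕ, stirling2 n n = 1 := by
  intro n
  induction n with
  | zero => rfl
  | succ n ih =>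
    show (n + 1) * stirling2 n (n + 1) + stirling2 n n = 1
    rw [stirling2_eq_zero n (n + 1) (by omega), ih]
    simp

lemma stirling2_one : ∀ p : ℕ, stirling2 (p + 1) 1 = 1 := by
  intro p
  induction p with
  | zero => rfl
  | succ p ih =>
    show 1 * stirling2 (p + 1) 1 + stirling2 (p + 1) 0 = 1
    rw [ih]
    show 1 * 1 + 0 = 1
    rfl

lemma stirling2_ge : ∀ d q : ℕ, 1 ≤ q → q ^ d ≤ stirling2 (q + d) q := by
  intro d
  induction d with
  | zero => intro q hq; simp [stirling2_self]
  | succ d ih =>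
    intro q hq
    obtain ⟨r, rfl⟩ : ∃ r, q = r + 1 := ⟨q - 1, by omega⟩
    have : r + 1 + (d + 1) = (r + 1 + d) + 1 := by omega
    rw [this]
    show (r + 1) ^ (d + 1) ≤ (r + 1) * stirling2 (r + 1 + d) (r + 1) + stirling2 (r + 1 + d) r
    calc (r + 1) ^ (d + 1) = (r + 1) * (r + 1) ^ d := by ring
    _ ≤ (r + 1) * stirling2 (r + 1 + d) (r + 1) :=
        Nat.mul_le_mul_left _ (ih (r + 1) (by omega))
    _ ≤ _ := Nat.le_add_right _ _

lemma stirling2_le : ∀ p q : ℕ, stirling2 p q ≤ p.choose q * q ^ (p - q) := by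
  intro p
  induction p with
  | zero =>
    intro q
    match q with
    | 0 => simp [stirling2]
    | q + 1 => show 0 ≤ _; exact Nat.zero_le _
  | succ p ih =>
    intro q
    match q with
    | 0 => show 0 ≤ _; exact Nat.zero_le _
    | q + 1 =>
      show (q + 1) * stirling2 p (q + 1) + stirling2 p q ≤ _
      rcases le_or_gt (q + 1) p with h | h
      · have e1 : p + 1 - (q + 1) = (p - (q + 1)) + 1 := by omega
        have e2 : p - q = p - (q + 1) + 1 := by omega
        calc (q + 1) * stirling2 p (q + 1) + stirling2 p q
            ≤ (q + 1) * (p.choose (q + 1) * (q + 1) ^ (p - (q + 1)))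
              + p.choose q * q ^ (p - q) := by
              exact Nat.add_le_add (Nat.mul_le_mul_left _ (ih (q + 1))) (ih q)
        _ ≤ p.choose (q + 1) * (q + 1) ^ (p - (q + 1) + 1)
              + p.choose q * (q + 1) ^ (p - (q + 1) + 1) := by
              apply Nat.add_le_add
              · rw [pow_succ]; ring_nf; exact le_refl _
              · rw [e2]
                exact Nat.mul_le_mul_left _ (Nat.pow_le_pow_left (by omega) _)
        _ = (p.choose q + p.choose (q + 1)) * (q + 1) ^ (p - (q + 1) + 1) := by ring
        _ = (p + 1).choose (q + 1) * (q + 1) ^ (p + 1 - (q + 1)) := by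
              rw [Nat.choose_succ_succ]
              congr 1
              congr 1
              omega
      · rw [stirling2_eq_zero p (q + 1) h, Nat.mul_zero, Nat.zero_add]
        rcases le_or_gt q p with h2 | h2
        · have : q = p := by omega
          subst this
          rw [stirling2_self]
          simp [Nat.choose_self]
        · rw [stirling2_eq_zero p q h2]; exact Nat.zero_le _

lemma choose_le_two_pow (p q : ℕ) : p.choose q ≤ 2 ^ p := by
  rcases le_or_gt q p with h | h
  · calc p.choose q ≤ ∑ i ∈ Finset.range (p + 1), p.choose i :=
        Finset.single_le_sum (fun i _ => Nat.zero_le _) (Finset.mem_range.mpr (by omega))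
    _ = 2 ^ p := Nat.sum_range_choose p
  · rw [Nat.choose_eq_zero_of_lt h]; exact Nat.zero_le _

lemma stirling2_le_pow (p q : ℕ) (hq : 2 ≤ q) (hqp : q ≤ p) :
    stirling2 p q ≤ q ^ (3 * (p - q)) := by
  have hC : p.choose q ≤ q ^ (2 * (p - q)) := by
    rcases le_or_gt p (q * q) with h | h
    · calc p.choose q = p.choose (p - q) := (Nat.choose_symm hqp).symm
      _ ≤ p ^ (p - q) := Nat.choose_le_pow _ _
      _ ≤ (q * q) ^ (p - q) := Nat.pow_le_pow_left h _
      _ = q ^ (2 * (p - q)) := by rw [pow_mul, sq]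
    · have h2q : 2 * q ≤ p := by nlinarith
      calc p.choose q ≤ 2 ^ p := choose_le_two_pow p q
      _ ≤ q ^ p := Nat.pow_le_pow_left hq _
      _ ≤ q ^ (2 * (p - q)) := Nat.pow_le_pow_right (by omega) (by omega)
  calc stirling2 p q ≤ p.choose q * q ^ (p - q) := stirling2_le p q
  _ ≤ q ^ (2 * (p - q)) * q ^ (p - q) := Nat.mul_le_mul_right _ hC
  _ = q ^ (3 * (p - q)) := by rw [← pow_add]; ring_nf

/-- **Logarithmic growth of Stirling numbers of the second kind.** There are positive
constants `c₁, c₂` such that for all `1 ≤ q ≤ p`,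
`c₁ (p - q) log q ≤ log S(p,q) ≤ c₂ (p - q) log q`. -/
theorem stirling2_log_bounds :
    ∃ c₁ c₂ : ℝ, 0 < c₁ ∧ 0 < c₂ ∧
      ∀ p q : ℕ, 1 ≤ p → 1 ≤ q → q ≤ p →
        c₁ * ((p - q : ℕ) : ℝ) * Real.log q ≤ Real.log (stirling2 p q) ∧
        Real.log (stirling2 p q) ≤ c₂ * ((p - q : ℕ) : ℝ) * Real.log q := by
  refine ⟨1, 3, one_pos, by norm_num, fun p q hp hq hqp => ?_⟩
  rcases eq_or_lt_of_le hq with hq1 | hq2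
  · -- q = 1
    obtain ⟨r, rfl⟩ : ∃ r, p = r + 1 := ⟨p - 1, by omega⟩
    rw [← hq1, stirling2_one]
    simp
  · -- 2 ≤ q
    have hq2 : 2 ≤ q := hq2
    have hlow : (q : ℕ) ^ (p - q) ≤ stirling2 p q := by
      have := stirling2_ge (p - q) q hq
      rwa [Nat.add_sub_cancel' hqp] at this
    have hSpos : 0 < stirling2 p q := lt_of_lt_of_le (Nat.pow_pos (by omega)) hlow
    have hhigh : stirling2 p q ≤ q ^ (3 * (p - q)) := stirling2_le_pow p q hq2 hqp
    constructor
    · calc (1 : ℝ) * ((p - q : ℕ) : ℝ) * Real.log q = Real.log ((q : ℝ) ^ (p - q)) := by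
            rw [Real.log_pow]; ring
      _ ≤ Real.log (stirling2 p q) := by
            apply Real.log_le_log (by positivity)
            exact_mod_cast hlow
    · calc Real.log (stirling2 p q) ≤ Real.log ((q : ℝ) ^ (3 * (p - q))) := by
            apply Real.log_le_log (by exact_mod_cast hSpos)
            exact_mod_cast hhigh
      _ = 3 * ((p - q : ℕ) : ℝ) * Real.log q := by
            rw [Real.log_pow]; push_cast; ring
end
end

section
/- Equivalence of the projected (canonical-correlation-type) form of CRL and weighted reduced-rank regression. Let X ∈ ℝ^{n×p}, Y ∈ ℝ^{n×m}, 1 ≤ r ≤ rank(Y), and 1 ≤ q ≤ p. Let Σ_Y = YᵀY/n and let G be the Moore–Penrose inverse of Σ_Y, i.e., the unique matrix satisfying Σ_Y G Σ_Y = Σ_Y, G Σ_Y G = G, (Σ_Y G)ᵀ = Σ_Y G, and (G Σ_Y)ᵀ = G Σ_Y. Then inf over (S,A) ∈ ℝ^{p×r} × ℝ^{m×r} subject to (YA)ᵀ(YA) = nI and ‖S‖_{2,C} ≤ q of ½‖YA − XS‖_F² equals [ inf over B ∈ ℝ^{p×m} subject to rank(B) ≤ r and ‖B‖_{2,C} ≤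 q of ½ Tr{ (Y − XB) G (Y − XB)ᵀ } ] + (n/2)(r − rank(Y)). The same conclusion holds when the constraint ‖·‖_{2,C} ≤ q is replaced throughout by the constraint that the number of nonzero rows is at most q. -/
open Matrix

noncomputable section

/-- The space of real `k × l` matrices. -/
abbrev Mat (k l : ℕ) := Matrix (Fin k) (Fin l) ℝ

/-- Frobenius (trace) inner product. -/
def mip {k l : ℕ} (A B : Mat k l) : ℝ := ∑ i, ∑ j, A i j * B i j

/-- Squared Frobenius norm. -/
def frobSq {k l : ℕ} (A : Mat k l) : ℝ := mip A A

/-- Number of distinct rows of a matrix, `‖B‖_{2,C}`. -/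
def distinctRows {k l : ℕ} (A : Mat k l) : ℕ := (Set.range fun i => A i).ncard

/-- Number of nonzero rows of a matrix. -/
def nonzeroRows {k l : ℕ} (A : Mat k l) : ℕ := {i : Fin k | A i ≠ 0}.ncard

lemma mat_ext_mulVec {a b : ℕ} {M N : Matrix (Fin a) (Fin b) ℝ}
    (h : ∀ x, M *ᵥ x = N *ᵥ x) : M = N := by
  ext i j
  have := congrFun (h (Pi.single j 1)) i
  simpa [Matrix.mulVec_single] using this

lemma rank_smul_ne {a b : ℕ} {c : ℝ} (hc : c ≠ 0) (M : Matrix (Fin a) (Fin b) ℝ) :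
    (c • M).rank = M.rank := by
  apply le_antisymm
  · have : c • M = (c • (1 : Matrix (Fin a) (Fin a) ℝ)) * M := by
      rw [Matrix.smul_mul, Matrix.one_mul]
    rw [this]
    exact Matrix.rank_mul_le_right _ _
  · have : M = (c⁻¹ • (1 : Matrix (Fin a) (Fin a) ℝ)) * (c • M) := by
      rw [Matrix.smul_mul, Matrix.one_mul, smul_smul, inv_mul_cancel₀ hc, one_smul]
    conv_lhs => rw [this]
    exact Matrix.rank_mul_le_right _ _

lemma frobSq_eq_trace {a b : ℕ} (M : Mat a b) : frobSq M = Matrix.trace (M * Mᵀ) := by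
  simp [frobSq, mip, Matrix.trace, Matrix.mul_apply, Matrix.diag]

lemma frobSq_nonneg {a b : ℕ} (M : Mat a b) : 0 ≤ frobSq M := by
  unfold frobSq mip
  apply Finset.sum_nonneg
  intro i _
  apply Finset.sum_nonneg
  intro j _
  exact mul_self_nonneg _

lemma sInf_image_add (s : Set ℝ) (c : ℝ) (hne : s.Nonempty) (hbdd : BddBelow s) :
    sInf ((fun x => x + c) '' s) = sInf s + c := by
  obtain ⟨l, hl⟩ := hbdd
  apply le_antisymm
  · have h1 : ∀ x ∈ s, sInf ((fun x => x + c) '' s) ≤ x + c := by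
      intro x hx
      exact csInf_le ⟨l + c, by rintro _ ⟨y, hy, rfl⟩; exact add_le_add_left (hl hy) c⟩
        ⟨x, hx, rfl⟩
    have : sInf ((fun x => x + c) '' s) - c ≤ sInf s :=
      le_csInf hne (fun x hx => by linarith [h1 x hx])
    linarith
  · apply le_csInf (hne.image _)
    rintro _ ⟨y, hy, rfl⟩
    exact add_le_add_left (csInf_le ⟨l, hl⟩ hy) c

lemma distinctRows_mul_le {p a b : ℕ} (M : Mat p a) (N : Mat a b) :
    distinctRows (M * N) ≤ distinctRows M := by
  have h : (Set.range fun i => (M * N) i) = (fun v => v ᵥ* N) '' (Set.range fun i => M i) := by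
    rw [← Set.range_comp]
    congr 1
  rw [distinctRows, h]
  exact Set.ncard_image_le (Set.finite_range _)

lemma nonzeroRows_mul_le {p a b : ℕ} (M : Mat p a) (N : Mat a b) :
    nonzeroRows (M * N) ≤ nonzeroRows M := by
  apply Set.ncard_le_ncard _ (Set.toFinite _)
  intro i hi
  simp only [Set.mem_setOf_eq] at *
  intro h0
  apply hi
  funext j
  have : M i = 0 := h0
  simp [Matrix.mul_apply, show ∀ k, M i k = 0 from fun k => congrFun this k]

lemma G_symm {m : ℕ} {Sg G : Mat m m} (hS : Sgᵀ = Sg)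
    (hG1 : Sg * G * Sg = Sg) (hG2 : G * Sg * G = G)
    (hG3 : (Sg * G)ᵀ = Sg * G) (hG4 : (G * Sg)ᵀ = G * Sg) : Gᵀ = G := by
  set T := Gᵀ with hT
  have hST : Sg * T = G * Sg := by rw [← hG4, Matrix.transpose_mul, hS]
  have hTS : T * Sg = Sg * G := by rw [← hG3, Matrix.transpose_mul, hS]
  have hG1T : Sg * T * Sg = Sg := by
    have := congrArg Matrix.transpose hG1
    rwa [Matrix.transpose_mul, Matrix.transpose_mul, hS, ← mul_assoc] at this
  have hG2T : T * Sg * T = T := by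
    have := congrArg Matrix.transpose hG2
    rwa [Matrix.transpose_mul, Matrix.transpose_mul, hS, ← mul_assoc] at this
  have hSTsymm : (Sg * T)ᵀ = Sg * T := by rw [hST]; exact hG4
  have hTSsymm : (T * Sg)ᵀ = T * Sg := by rw [hTS]; exact hG3
  have stepA : Sg * G = Sg * T := by
    calc Sg * G = (Sg * T * Sg) * G := by rw [hG1T]
      _ = (Sg * T) * (Sg * G) := by rw [mul_assoc]
      _ = ((Sg * G)ᵀ * (Sg * T)ᵀ)ᵀ := by
            rw [← Matrix.transpose_mul, Matrix.transpose_transpose]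
      _ = ((Sg * G) * (Sg * T))ᵀ := by rw [hG3, hSTsymm]
      _ = ((Sg * G * Sg) * T)ᵀ := by rw [mul_assoc, mul_assoc, mul_assoc]
      _ = (Sg * T)ᵀ := by rw [hG1]
      _ = Sg * T := hSTsymm
  have stepB : G * Sg = T * Sg := by
    calc G * Sg = G * (Sg * T * Sg) := by rw [hG1T]
      _ = (G * Sg) * (T * Sg) := by
            rw [mul_assoc, mul_assoc]
      _ = ((T * Sg)ᵀ * (G * Sg)ᵀ)ᵀ := by
            rw [← Matrix.transpose_mul, Matrix.transpose_transpose]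
      _ = ((T * Sg) * (G * Sg))ᵀ := by rw [hG4, hTSsymm]
      _ = (T * (Sg * G * Sg))ᵀ := by rw [mul_assoc, mul_assoc]
      _ = (T * Sg)ᵀ := by rw [hG1]
      _ = T * Sg := hTSsymm
  calc T = T * Sg * T := hG2T.symm
    _ = G * Sg * T := by rw [stepB]
    _ = G * (Sg * T) := by rw [mul_assoc]
    _ = G * (Sg * G) := by rw [stepA]
    _ = G * Sg * G := by rw [mul_assoc]
    _ = G := hG2

lemma transpose_mul_self_eq_zero' {a b : ℕ} {N : Mat a b} (h : Nᵀ * N = 0) : N = 0 := by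
  have hH : Nᴴ = Nᵀ := by ext i j; simp [Matrix.conjTranspose_apply]
  exact Matrix.conjTranspose_mul_self_eq_zero.mp (by rw [hH]; exact h)

lemma Y_mul_E {n m : ℕ} (hn : 0 < n) (Y : Mat n m) (G : Mat m m)
    (hG1 : ((1 / (n : ℝ)) • (Yᵀ * Y)) * G * ((1 / (n : ℝ)) • (Yᵀ * Y))
        = (1 / (n : ℝ)) • (Yᵀ * Y)) :
    Y * (G * ((1 / (n : ℝ)) • (Yᵀ * Y))) = Y := by
  set Sg : Mat m m := (1 / (n : ℝ)) • (Yᵀ * Y) with hSg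
  have hn' : (n : ℝ) ≠ 0 := Nat.cast_ne_zero.mpr hn.ne'
  have hYtY : Yᵀ * Y = (n : ℝ) • Sg := by
    rw [hSg, smul_smul, mul_one_div, div_self hn', one_smul]
  set N : Mat n m := Y * (G * Sg) - Y with hN
  have h1 : Sg * (G * Sg) = Sg := by rw [← mul_assoc]; exact hG1
  have hYN : Yᵀ * N = 0 := by
    rw [hN, Matrix.mul_sub, ← Matrix.mul_assoc, hYtY, Matrix.smul_mul, h1, sub_self]
  have hNN : Nᵀ * N = 0 := by
    rw [hN]
    conv_lhs => rw [Matrix.transpose_sub, Matrix.transpose_mul, Matrix.sub_mul]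
    rw [← hN, Matrix.mul_assoc, hYN, Matrix.mul_zero]; simp
  have := transpose_mul_self_eq_zero' hNN
  rw [hN] at this
  exact sub_eq_zero.mp this

lemma trace_quad {n m : ℕ} (Y C : Mat n m) (G : Mat m m) (hGs : Gᵀ = G) :
    Matrix.trace ((Y - C) * G * (Y - C)ᵀ)
      = Matrix.trace (Y * G * Yᵀ) - 2 * Matrix.trace (C * G * Yᵀ)
        + Matrix.trace (C * G * Cᵀ) := by
  have h1 : (Y - C) * G * (Y - C)ᵀ
      = Y * G * Yᵀ - Y * G * Cᵀ - (C * G * Yᵀ - C * G * Cᵀ) := by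
    rw [Matrix.transpose_sub, Matrix.sub_mul, Matrix.mul_sub, Matrix.sub_mul, Matrix.sub_mul]
    abel
  have h2 : Matrix.trace (Y * G * Cᵀ) = Matrix.trace (C * G * Yᵀ) := by
    rw [← Matrix.trace_transpose (Y * G * Cᵀ), Matrix.transpose_mul, Matrix.transpose_mul,
      Matrix.transpose_transpose, hGs, ← Matrix.mul_assoc]
  rw [h1, Matrix.trace_sub, Matrix.trace_sub, Matrix.trace_sub, h2]
  ring

lemma trace_prod_sym {n p s : ℕ} (X : Mat n p) (S : Mat p s) :
    Matrix.trace (X * (S * Sᵀ) * Xᵀ) = frobSq (X * S) := by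
  rw [frobSq_eq_trace, Matrix.transpose_mul, ← Matrix.mul_assoc (X * S) Sᵀ Xᵀ,
    ← Matrix.mul_assoc X S Sᵀ]

lemma exists_onb_with_sub {F : Type*} [NormedAddCommGroup F] [InnerProductSpace ℝ F]
    [FiniteDimensional ℝ F] {K : Submodule ℝ F} {r s : ℕ}
    (hfin : Module.finrank ℝ F = r + s) (hr1 : 1 ≤ r) (hK : s ≤ Module.finrank ℝ K) :
    ∃ z : (Fin r ⊕ Fin s) → F, Orthonormal ℝ z ∧ (∀ j, z (Sum.inr j) ∈ K) ∧
      (∀ x : F, x = ∑ i, (inner ℝ (z i) x : ℝ) • z i) := by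
  classical
  have hne : Nonempty (Fin r ⊕ Fin s) := ⟨Sum.inl ⟨0, hr1⟩⟩
  let bK := stdOrthonormalBasis ℝ K
  let c' : Fin s → F := fun j => ((bK (Fin.castLE hK j) : K) : F)
  have hc'mem : ∀ j, c' j ∈ K := fun j => SetLike.coe_mem _
  have honc : Orthonormal ℝ (fun i : Fin (Module.finrank ℝ K) => ((bK i : K) : F)) := by
    rw [orthonormal_iff_ite]
    intro i j
    rw [← Submodule.coe_inner]
    exact orthonormal_iff_ite.mp bK.orthonormal i j
  have hc'on : Orthonormal ℝ c' := honc.comp _ (Fin.castLE_injective hK)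
  let S₂ : Submodule ℝ F := Submodule.span ℝ (Set.range c')
  have hS₂fin : Module.finrank ℝ S₂ = s := by
    rw [finrank_span_eq_card hc'on.linearIndependent, Fintype.card_fin]
  have hfinorth : Module.finrank ℝ (S₂ᗮ) = r := by
    have h1 := Submodule.finrank_add_finrank_orthogonal S₂
    omega
  let d0 := stdOrthonormalBasis ℝ (S₂ᗮ : Submodule ℝ F)
  let z : (Fin r ⊕ Fin s) → F :=
    Sum.elim (fun i => ((d0 ((finCongr hfinorth.symm) i) : S₂ᗮ) : F)) c'
  have hond : Orthonormal ℝ (fun i : Fin (Module.finrank ℝ (S₂ᗮ : Submodule ℝ F)) =>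
      ((d0 i : S₂ᗮ) : F)) := by
    rw [orthonormal_iff_ite]
    intro i j
    rw [← Submodule.coe_inner]
    exact orthonormal_iff_ite.mp d0.orthonormal i j
  have hz_on : Orthonormal ℝ z := by
    rw [orthonormal_iff_ite]
    rintro (i | i) (j | j)
    · have h0 := orthonormal_iff_ite.mp (hond.comp _ (finCongr hfinorth.symm).injective) i j
      simpa [z] using h0
    · have hcs : c' j ∈ S₂ := Submodule.subset_span ⟨j, rfl⟩
      have hds : ((d0 ((finCongr hfinorth.symm) i) : S₂ᗮ) : F) ∈ S₂ᗮ := SetLike.coe_mem _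
      simp only [z, Sum.elim_inl, Sum.elim_inr]
      rw [if_neg (by simp)]
      exact Submodule.inner_left_of_mem_orthogonal hcs hds
    · have hcs : c' i ∈ S₂ := Submodule.subset_span ⟨i, rfl⟩
      have hds : ((d0 ((finCongr hfinorth.symm) j) : S₂ᗮ) : F) ∈ S₂ᗮ := SetLike.coe_mem _
      simp only [z, Sum.elim_inl, Sum.elim_inr]
      rw [if_neg (by simp)]
      exact Submodule.inner_right_of_mem_orthogonal hcs hds
    · have h0 := orthonormal_iff_ite.mp hc'on i j
      simpa [z] using h0
  have hcard : Fintype.card (Fin r ⊕ Fin s) = Module.finrank ℝ F := by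
    simp [Fintype.card_sum, hfin]
  have hspan : ⊤ ≤ Submodule.span ℝ (Set.range z) :=
    ge_of_eq (LinearIndependent.span_eq_top_of_card_eq_finrank
      hz_on.linearIndependent hcard)
  let bz : OrthonormalBasis (Fin r ⊕ Fin s) ℝ F := OrthonormalBasis.mk hz_on hspan
  refine ⟨z, hz_on, fun j => hc'mem j, ?_⟩
  intro x
  have h1 := bz.sum_repr x
  have h2 : ∀ i, bz.repr x i = (inner ℝ (z i) x : ℝ) := by
    intro i
    rw [bz.repr_apply_apply, show bz i = z i from by rw [OrthonormalBasis.coe_mk]]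
  have h3 : ∀ i, bz i = z i := fun i => by rw [OrthonormalBasis.coe_mk]
  calc x = ∑ i, bz.repr x i • bz i := h1.symm
    _ = ∑ i, (inner ℝ (z i) x : ℝ) • z i := by
        apply Finset.sum_congr rfl
        intro i _
        rw [h2, h3]

lemma exists_frames {n m p r : ℕ} (hn : 0 < n) (hr1 : 1 ≤ r) (Y : Mat n m) (G : Mat m m)
    (B : Mat p m) (hr : r ≤ Y.rank) (hBr : B.rank ≤ r)
    (hG1 : ((1 / (n : ℝ)) • (Yᵀ * Y)) * G * ((1 / (n : ℝ)) • (Yᵀ * Y))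
        = (1 / (n : ℝ)) • (Yᵀ * Y))
    (hG2 : G * ((1 / (n : ℝ)) • (Yᵀ * Y)) * G = G)
    (hG3 : (((1 / (n : ℝ)) • (Yᵀ * Y)) * G)ᵀ = ((1 / (n : ℝ)) • (Yᵀ * Y)) * G)
    (hG4 : (G * ((1 / (n : ℝ)) • (Yᵀ * Y)))ᵀ = G * ((1 / (n : ℝ)) • (Yᵀ * Y)))
    (hGs : Gᵀ = G)
    (hYE : Y * (G * ((1 / (n : ℝ)) • (Yᵀ * Y))) = Y) :
    ∃ (A : Mat m r) (V : Mat m (Y.rank - r)),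
      (Y * A)ᵀ * (Y * A) = (n : ℝ) • (1 : Mat r r) ∧
      (Y * V)ᵀ * (Y * V) = (n : ℝ) • (1 : Mat (Y.rank - r) (Y.rank - r)) ∧
      A * Aᵀ + V * Vᵀ = G ∧ B * V = 0 := by
  classical
  set k := Y.rank with hk
  set Sg : Mat m m := (1 / (n : ℝ)) • (Yᵀ * Y) with hSg
  have hn' : (n : ℝ) ≠ 0 := Nat.cast_ne_zero.mpr hn.ne'
  have hS : Sgᵀ = Sg := by
    rw [hSg, Matrix.transpose_smul, Matrix.transpose_mul, Matrix.transpose_transpose]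
  have hYtY : Yᵀ * Y = (n : ℝ) • Sg := by
    rw [hSg, smul_smul, mul_one_div, div_self hn', one_smul]
  obtain ⟨E, hE⟩ : ∃ E : Mat m m, E = G * Sg := ⟨_, rfl⟩
  rw [← hE] at hG2 hG4 hYE
  -- hG2 : E * G = G, hG4 : Eᵀ = E, hYE : Y * E = Y
  have hEE : E * E = E := by
    calc E * E = E * (G * Sg) := by rw [← hE]
      _ = (E * G) * Sg := by rw [mul_assoc]
      _ = G * Sg := by rw [hG2]
      _ = E := hE.symm
  have hSE : Sg * E = Sg := by rw [hE, ← mul_assoc]; exact hG1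
  have hEG : E * G = G := hG2
  have hSG : Sg * G = E := by
    calc Sg * G = Sgᵀ * Gᵀ := by rw [hS, hGs]
      _ = (G * Sg)ᵀ := by rw [Matrix.transpose_mul]
      _ = Eᵀ := by rw [← hE]
      _ = E := hG4
  -- Euclidean space setup
  set toE : (Fin n → ℝ) ≃ₗ[ℝ] EuclideanSpace ℝ (Fin n) :=
    (WithLp.linearEquiv 2 ℝ (Fin n → ℝ)).symm with htoE
  set rn : ℝ := (Real.sqrt n)⁻¹ with hrn
  have hrnpos : 0 < Real.sqrt n := Real.sqrt_pos.mpr (by exact_mod_cast hn)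
  have hrn0 : rn ≠ 0 := inv_ne_zero hrnpos.ne'
  have hrn2 : rn * rn = 1 / (n : ℝ) := by
    rw [hrn, ← mul_inv, Real.mul_self_sqrt (Nat.cast_nonneg n), one_div]
  set φ : (Fin m → ℝ) →ₗ[ℝ] EuclideanSpace ℝ (Fin n) :=
    toE.toLinearMap ∘ₗ (Matrix.mulVecLin (rn • Y)) with hφ
  set ξ : EuclideanSpace ℝ (Fin n) →ₗ[ℝ] (Fin m → ℝ) :=
    (Matrix.mulVecLin (rn • (G * Yᵀ))) ∘ₗ toE.symm.toLinearMap with hξ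
  have hφ_apply : ∀ v, φ v = toE ((rn • Y) *ᵥ v) := fun v => rfl
  have hξ_apply : ∀ z, ξ z = (rn • (G * Yᵀ)) *ᵥ (toE.symm z) := fun z => rfl
  have hξφ : ∀ v, ξ (φ v) = E *ᵥ v := by
    intro v
    rw [hφ_apply, hξ_apply, LinearEquiv.symm_apply_apply]
    rw [Matrix.smul_mulVec, Matrix.smul_mulVec, Matrix.mulVec_smul]
    rw [Matrix.mulVec_mulVec, smul_smul, hrn2]
    rw [hE, hSg, Matrix.mul_smul, Matrix.smul_mulVec, ← Matrix.mul_assoc]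
  have hφξ : ∀ v, φ (E *ᵥ v) = φ v := by
    intro v; rw [hφ_apply, hφ_apply]; congr 1
    rw [Matrix.smul_mulVec, Matrix.smul_mulVec, Matrix.mulVec_mulVec, hYE]
  have hdot : ∀ a b : Fin m → ℝ, (Y *ᵥ a) ⬝ᵥ (Y *ᵥ b) = (n : ℝ) * (a ⬝ᵥ (Sg *ᵥ b)) := by
    intro a b
    rw [Matrix.dotProduct_mulVec, ← Matrix.mulVec_transpose, Matrix.mulVec_mulVec, hYtY]
    rw [Matrix.smul_mulVec, smul_dotProduct, smul_eq_mul]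
    congr 1
    conv_rhs => rw [Matrix.dotProduct_mulVec]
    rw [← Matrix.mulVec_transpose Sg a, hS]
  have hinner : ∀ a b : Fin m → ℝ, (inner ℝ (φ a) (φ b) : ℝ) = a ⬝ᵥ (Sg *ᵥ b) := by
    intro a b
    rw [hφ_apply, hφ_apply]
    have htoEdot : ∀ x y : Fin n → ℝ, (inner ℝ (toE x) (toE y) : ℝ) = x ⬝ᵥ y := by
      intro x y
      simp [htoE, PiLp.inner_apply, RCLike.inner_apply, dotProduct,
        WithLp.linearEquiv_symm_apply, mul_comm]
    rw [htoEdot]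
    rw [Matrix.smul_mulVec, Matrix.smul_mulVec, smul_dotProduct,
      dotProduct_smul, smul_eq_mul, smul_eq_mul, hdot, ← mul_assoc, ← mul_assoc,
      hrn2]
    field_simp
  -- Submodules
  set W : Submodule ℝ (Fin m → ℝ) := LinearMap.range (Matrix.mulVecLin E) with hW
  have hWfix : ∀ w ∈ W, E *ᵥ w = w := by
    rintro w ⟨x, rfl⟩
    rw [Matrix.mulVecLin_apply, Matrix.mulVec_mulVec, hEE]
  have hWmem : ∀ x : Fin m → ℝ, E *ᵥ x ∈ W := fun x => ⟨x, rfl⟩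
  set Yh : Submodule ℝ (EuclideanSpace ℝ (Fin n)) := LinearMap.range φ with hYh
  have hrankSg : Sg.rank = k := by
    rw [hSg, rank_smul_ne (one_div_ne_zero hn'), Matrix.rank_transpose_mul_self]
  have hrankE : E.rank = k := by
    apply le_antisymm
    · calc E.rank = (G * Sg).rank := by rw [hE]
        _ ≤ Sg.rank := Matrix.rank_mul_le_right _ _
        _ = k := hrankSg
    · calc k = Sg.rank := hrankSg.symm
        _ = (Sg * E).rank := by rw [hSE]
        _ ≤ E.rank := Matrix.rank_mul_le_right _ _
  have hfinW : Module.finrank ℝ W = k := hrankE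
  have hfinYh : Module.finrank ℝ Yh = k := by
    have h1 : Yh = Submodule.map (toE : (Fin n → ℝ) →ₗ[ℝ] EuclideanSpace ℝ (Fin n))
        (LinearMap.range (Matrix.mulVecLin (rn • Y))) := by
      rw [hYh, hφ, LinearMap.range_comp]
    rw [h1]
    have h2 := LinearEquiv.finrank_map_eq toE (LinearMap.range (Matrix.mulVecLin (rn • Y)))
    rw [h2]
    have h3 : (rn • Y).rank = k := by rw [rank_smul_ne hrn0]
    exact h3
  set kerB : Submodule ℝ (Fin m → ℝ) := LinearMap.ker (Matrix.mulVecLin B) with hkerB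
  set P0 : Submodule ℝ (Fin m → ℝ) := W ⊓ kerB with hP0def
  have hfinpi : Module.finrank ℝ (Fin m → ℝ) = m := by
    simp [Module.finrank_pi]
  have hsup : Module.finrank ℝ (W ⊔ kerB : Submodule ℝ (Fin m → ℝ)) ≤ m :=
    le_trans (Submodule.finrank_le _) (le_of_eq hfinpi)
  have hrn_ker : B.rank + Module.finrank ℝ kerB = m := by
    have := LinearMap.finrank_range_add_finrank_ker (Matrix.mulVecLin B)
    rw [hfinpi] at this
    exact this
  have hsupinf := Submodule.finrank_sup_add_finrank_inf_eq W kerB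
  have hP0 : k - r ≤ Module.finrank ℝ P0 := by
    rw [hP0def]
    omega
  set Kh : Submodule ℝ (EuclideanSpace ℝ (Fin n)) := Submodule.map φ P0 with hKh
  have hKh_le : Kh ≤ Yh := by
    rw [hKh, hYh, ← Submodule.map_top]
    exact Submodule.map_mono le_top
  have hmapback : Submodule.map ξ Kh = P0 := by
    rw [hKh, ← Submodule.map_comp]
    apply le_antisymm
    · rintro x ⟨y, hy, rfl⟩
      have : (ξ ∘ₗ φ) y = E *ᵥ y := by
        simp only [LinearMap.comp_apply]; exact hξφ y
      rw [this, hWfix y hy.1]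
      exact hy
    · intro y hy
      refine ⟨y, hy, ?_⟩
      have : (ξ ∘ₗ φ) y = E *ᵥ y := by
        simp only [LinearMap.comp_apply]; exact hξφ y
      rw [this, hWfix y hy.1]
  have hfinKh : k - r ≤ Module.finrank ℝ Kh := by
    have h1 : Module.finrank ℝ P0 ≤ Module.finrank ℝ Kh := by
      conv_lhs => rw [← hmapback]
      exact Submodule.finrank_map_le ξ Kh
    omega
  set K' : Submodule ℝ Yh := Submodule.comap Yh.subtype Kh with hK'
  have hfinK' : Module.finrank ℝ K' = Module.finrank ℝ Kh :=
    (Submodule.comapSubtypeEquivOfLe hKh_le).finrank_eq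
  have htt : k - r ≤ Module.finrank ℝ K' := by omega
  have hfinYh' : Module.finrank ℝ Yh = r + (k - r) := by omega
  obtain ⟨z, hz_on, hz_mem, hz_repr⟩ := exists_onb_with_sub hfinYh' hr1 htt
  set u : (Fin r ⊕ Fin (k - r)) → (Fin m → ℝ) :=
    fun i => ξ ((z i : EuclideanSpace ℝ (Fin n))) with hu
  have hzrange : ∀ i, ∃ v, φ v = (z i : EuclideanSpace ℝ (Fin n)) := fun i =>
    (z i).2
  have hφu : ∀ i, φ (u i) = (z i : EuclideanSpace ℝ (Fin n)) := by
    intro i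
    obtain ⟨v, hv⟩ := hzrange i
    rw [hu]
    simp only
    rw [← hv, hξφ, hφξ]
  have hEu : ∀ i, E *ᵥ u i = u i := by
    intro i
    obtain ⟨v, hv⟩ := hzrange i
    rw [hu]
    simp only
    rw [← hv, hξφ, Matrix.mulVec_mulVec, hEE]
  have hBu : ∀ j, B *ᵥ u (Sum.inr j) = 0 := by
    intro j
    have h1 : ((z (Sum.inr j) : EuclideanSpace ℝ (Fin n))) ∈ Kh := by
      have h2 := hz_mem j
      rw [hK', Submodule.mem_comap] at h2
      exact h2
    rw [hKh] at h1
    obtain ⟨v, hv, hveq⟩ := h1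
    have hvW : v ∈ W := hv.1
    have hvK : v ∈ kerB := hv.2
    have huv : u (Sum.inr j) = v := by
      rw [hu]
      simp only
      rw [← hveq, hξφ, hWfix v hvW]
    rw [huv]
    rw [hkerB, LinearMap.mem_ker] at hvK
    exact hvK
  have hUon : ∀ i j, (u i) ⬝ᵥ (Sg *ᵥ u j) = if i = j then 1 else 0 := by
    intro i j
    rw [← hinner, hφu, hφu, ← Submodule.coe_inner]
    exact orthonormal_iff_ite.mp hz_on i j
  have hrepr : ∀ w ∈ W, w = ∑ i, ((u i) ⬝ᵥ (Sg *ᵥ w)) • u i := by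
    intro w hw
    have hφwYh : φ w ∈ Yh := ⟨w, rfl⟩
    have h1 := hz_repr ⟨φ w, hφwYh⟩
    have h2 : ∀ i, (inner ℝ (z i) (⟨φ w, hφwYh⟩ : Yh) : ℝ) = (u i) ⬝ᵥ (Sg *ᵥ w) := by
      intro i
      rw [Submodule.coe_inner]
      calc (inner ℝ ((z i : EuclideanSpace ℝ (Fin n))) (φ w) : ℝ)
          = inner ℝ (φ (u i)) (φ w) := by rw [hφu]
        _ = (u i) ⬝ᵥ (Sg *ᵥ w) := hinner _ _
    have h3 : φ w = ∑ i, ((u i) ⬝ᵥ (Sg *ᵥ w)) • (z i : EuclideanSpace ℝ (Fin n)) := by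
      have h4 := congrArg (Yh.subtype) h1
      rw [map_sum] at h4
      simp only [_root_.map_smul, Submodule.coe_subtype, h2] at h4
      exact h4
    have h5 : ξ (φ w) = ∑ i, ((u i) ⬝ᵥ (Sg *ᵥ w)) • u i := by
      rw [h3, map_sum]
      apply Finset.sum_congr rfl
      intro i _
      rw [_root_.map_smul]
    rw [hξφ, hWfix w hw] at h5
    exact h5
  -- the matrices
  set A : Mat m r := Matrix.of (fun a i => u (Sum.inl i) a) with hA
  set V : Mat m (k - r) := Matrix.of (fun a j => u (Sum.inr j) a) with hV
  have hgram : ∀ {s t : ℕ} (P : Mat m s) (Q : Mat m t) (i : Fin s) (j : Fin t),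
      ((Y * P)ᵀ * (Y * Q)) i j
        = (n : ℝ) * ((fun a => P a i) ⬝ᵥ (Sg *ᵥ (fun a => Q a j))) := by
    intro s t P Q i j
    have h1 : ((Y * P)ᵀ * (Y * Q)) i j
        = (Y *ᵥ (fun a => P a i)) ⬝ᵥ (Y *ᵥ (fun a => Q a j)) := by
      simp [Matrix.mul_apply, Matrix.mulVec, dotProduct, Matrix.transpose_apply,
        mul_comm]
    rw [h1, hdot]
  have goal1 : (Y * A)ᵀ * (Y * A) = (n : ℝ) • (1 : Mat r r) := by
    ext i j
    rw [hgram A A i j]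
    have hca : (fun a => A a i) = u (Sum.inl i) := rfl
    have hcb : (fun a => A a j) = u (Sum.inl j) := rfl
    rw [hca, hcb, hUon]
    by_cases h : i = j <;> simp [h, Matrix.one_apply]
  have goal2 : (Y * V)ᵀ * (Y * V) = (n : ℝ) • (1 : Mat (k - r) (k - r)) := by
    ext i j
    rw [hgram V V i j]
    have hca : (fun a => V a i) = u (Sum.inr i) := rfl
    have hcb : (fun a => V a j) = u (Sum.inr j) := rfl
    rw [hca, hcb, hUon]
    by_cases h : i = j <;> simp [h, Matrix.one_apply]
  have key : ∀ {s' : ℕ} (P : Mat m s') (y : Fin m → ℝ) (a : Fin m),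
      ((P * Pᵀ) *ᵥ y) a = ∑ i, ((fun b => P b i) ⬝ᵥ y) * P a i := by
    intro s' P y a
    simp only [Matrix.mulVec, dotProduct, Matrix.mul_apply, Matrix.transpose_apply]
    calc ∑ b, (∑ i, P a i * P b i) * y b
        = ∑ b, ∑ i, P a i * P b i * y b := by
          apply Finset.sum_congr rfl; intro b _; rw [Finset.sum_mul]
      _ = ∑ i, ∑ b, P a i * P b i * y b := Finset.sum_comm
      _ = ∑ i, (∑ b, P b i * y b) * P a i := by
          apply Finset.sum_congr rfl; intro i _
          rw [Finset.sum_mul]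
          apply Finset.sum_congr rfl; intro b _
          ring
  have hHmv : ∀ y, (A * Aᵀ + V * Vᵀ) *ᵥ y = ∑ i, ((u i) ⬝ᵥ y) • u i := by
    intro y
    funext a
    have hA1 := key A y a
    have hV1 := key V y a
    have hcA : ∀ i : Fin r, (fun b => A b i) = u (Sum.inl i) := fun i => rfl
    have hcV : ∀ j : Fin (k - r), (fun b => V b j) = u (Sum.inr j) := fun j => rfl
    simp only [Matrix.add_mulVec, Pi.add_apply, hA1, hV1]
    have hrhs : (∑ i, ((u i) ⬝ᵥ y) • u i) a = ∑ i, ((u i) ⬝ᵥ y) * u i a := by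
      simp [Finset.sum_apply]
    rw [hrhs, Fintype.sum_sum_type]
    rfl
  have hEA : E * A = A := by
    ext a i
    have h := congrFun (hEu (Sum.inl i)) a
    simp only [Matrix.mulVec, dotProduct] at h
    simpa [Matrix.mul_apply, hA] using h
  have hEV : E * V = V := by
    ext a j
    have h := congrFun (hEu (Sum.inr j)) a
    simp only [Matrix.mulVec, dotProduct] at h
    simpa [Matrix.mul_apply, hV] using h
  have hAtE : Aᵀ * E = Aᵀ := by
    calc Aᵀ * E = Aᵀ * Eᵀ := by rw [hG4]
      _ = (E * A)ᵀ := by rw [← Matrix.transpose_mul]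
      _ = Aᵀ := by rw [hEA]
  have hVtE : Vᵀ * E = Vᵀ := by
    calc Vᵀ * E = Vᵀ * Eᵀ := by rw [hG4]
      _ = (E * V)ᵀ := by rw [← Matrix.transpose_mul]
      _ = Vᵀ := by rw [hEV]
  have hHE : (A * Aᵀ + V * Vᵀ) * E = A * Aᵀ + V * Vᵀ := by
    rw [Matrix.add_mul, Matrix.mul_assoc, Matrix.mul_assoc, hAtE, hVtE]
  have hHSE : (A * Aᵀ + V * Vᵀ) * Sg * E = E := by
    apply mat_ext_mulVec
    intro x
    rw [← Matrix.mulVec_mulVec, ← Matrix.mulVec_mulVec]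
    rw [hHmv]
    exact (hrepr (E *ᵥ x) (hWmem x)).symm
  have hG' : A * Aᵀ + V * Vᵀ = G := by
    have h5 : (A * Aᵀ + V * Vᵀ) * Sg * E * G = E * G := by rw [hHSE]
    have h6 : (A * Aᵀ + V * Vᵀ) * Sg * E * G = (A * Aᵀ + V * Vᵀ) * Sg * G := by
      rw [mul_assoc ((A * Aᵀ + V * Vᵀ) * Sg), hEG]
    have h7 : (A * Aᵀ + V * Vᵀ) * Sg * G = G := by rw [← h6, h5, hEG]
    calc A * Aᵀ + V * Vᵀ = (A * Aᵀ + V * Vᵀ) * E := hHE.symm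
      _ = (A * Aᵀ + V * Vᵀ) * (Sg * G) := by rw [hSG]
      _ = (A * Aᵀ + V * Vᵀ) * Sg * G := by rw [mul_assoc]
      _ = G := h7
  have goal4 : B * V = 0 := by
    ext a j
    have h := congrFun (hBu j) a
    simp only [Matrix.mulVec, dotProduct] at h
    simpa [Matrix.mul_apply, hV] using h
  exact ⟨A, V, goal1, goal2, hG', goal4⟩


lemma traceG_split {n m r s : ℕ} (M : Mat n m) (G : Mat m m) (A : Mat m r) (V : Mat m s)
    (hGdec : A * Aᵀ + V * Vᵀ = G) :
    Matrix.trace (M * G * Mᵀ) = frobSq (M * A) + frobSq (M * V) := by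
  rw [← hGdec, Matrix.mul_add, Matrix.add_mul, Matrix.trace_add]
  congr 1
  · rw [frobSq_eq_trace, Matrix.transpose_mul, ← Matrix.mul_assoc (M * A) Aᵀ Mᵀ,
      ← Matrix.mul_assoc M A Aᵀ]
  · rw [frobSq_eq_trace, Matrix.transpose_mul, ← Matrix.mul_assoc (M * V) Vᵀ Mᵀ,
      ← Matrix.mul_assoc M V Vᵀ]

lemma hgramtrace {n m : ℕ} (Y : Mat n m) {s : ℕ} (P : Mat m s)
    (hP : (Y * P)ᵀ * (Y * P) = (n : ℝ) • (1 : Mat s s)) :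
    frobSq (Y * P) = (n : ℝ) * s := by
  rw [frobSq_eq_trace, ← Matrix.trace_mul_comm, hP, Matrix.trace_smul, Matrix.trace_one]
  simp

lemma key {n p m r q : ℕ} (X : Mat n p) (Y : Mat n m) (G : Mat m m)
    (hr1 : 1 ≤ r) (hr : r ≤ Y.rank)
    (hG1 : ((1 / (n : ℝ)) • (Yᵀ * Y)) * G * ((1 / (n : ℝ)) • (Yᵀ * Y))
        = (1 / (n : ℝ)) • (Yᵀ * Y))
    (hG2 : G * ((1 / (n : ℝ)) • (Yᵀ * Y)) * G = G)
    (hG3 : (((1 / (n : ℝ)) • (Yᵀ * Y)) * G)ᵀ = ((1 / (n : ℝ)) • (Yᵀ * Y)) * G)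
    (hG4 : (G * ((1 / (n : ℝ)) • (Yᵀ * Y)))ᵀ = G * ((1 / (n : ℝ)) • (Yᵀ * Y)))
    (ρ : ∀ l : ℕ, Mat p l → ℕ)
    (hρmul : ∀ {a b : ℕ} (M : Mat p a) (N : Mat a b), ρ b (M * N) ≤ ρ a M)
    (hρ0 : ρ m (0 : Mat p m) ≤ q) :
    sInf {v : ℝ | ∃ (S : Mat p r) (A : Mat m r),
        (Y * A)ᵀ * (Y * A) = (n : ℝ) • (1 : Mat r r) ∧ ρ r S ≤ q ∧
        v = frobSq (Y * A - X * S) / 2}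
      = sInf {v : ℝ | ∃ B : Mat p m, B.rank ≤ r ∧ ρ m B ≤ q ∧
          v = Matrix.trace ((Y - X * B) * G * (Y - X * B)ᵀ) / 2}
        + ((n : ℝ) / 2) * ((r : ℝ) - Y.rank) := by
  have hn : 0 < n := by
    have h1 : Y.rank ≤ n := Matrix.rank_le_height Y
    omega
  have hn' : (n : ℝ) ≠ 0 := Nat.cast_ne_zero.mpr hn.ne'
  set Sg : Mat m m := (1 / (n : ℝ)) • (Yᵀ * Y) with hSg
  have hS : Sgᵀ = Sg := by
    rw [hSg, Matrix.transpose_smul, Matrix.transpose_mul, Matrix.transpose_transpose]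
  have hGs : Gᵀ = G := G_symm hS hG1 hG2 hG3 hG4
  have hYE : Y * (G * Sg) = Y := Y_mul_E hn Y G hG1
  have hYtY : Yᵀ * Y = (n : ℝ) • Sg := by
    rw [hSg, smul_smul, mul_one_div, div_self hn', one_smul]
  have hSG : Sg * G = G * Sg := by
    calc Sg * G = Sgᵀ * Gᵀ := by rw [hS, hGs]
      _ = (G * Sg)ᵀ := by rw [Matrix.transpose_mul]
      _ = G * Sg := hG4
  have hSGYt : Sg * (G * Yᵀ) = Yᵀ := by
    have h1 := congrArg Matrix.transpose hYE
    rw [Matrix.transpose_mul, hG4] at h1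
    rw [← Matrix.mul_assoc, hSG]
    exact h1
  set k := Y.rank with hk
  obtain ⟨A₀, V₀, hA₀, hV₀, hGdec, -⟩ :=
    exists_frames hn hr1 Y G (0 : Mat p m) hr (by rw [Matrix.rank_zero]; omega)
      hG1 hG2 hG3 hG4 hGs hYE
  have hYGY : Matrix.trace (Y * G * Yᵀ) = (n : ℝ) * k := by
    rw [traceG_split Y G A₀ V₀ hGdec, hgramtrace Y A₀ hA₀, hgramtrace Y V₀ hV₀]
    have hcast : ((k - r : ℕ) : ℝ) = (k : ℝ) - r := Nat.cast_sub hr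
    rw [hcast]; ring
  have hASA : ∀ A : Mat m r, (Y * A)ᵀ * (Y * A) = (n : ℝ) • (1 : Mat r r) →
      Aᵀ * (Sg * A) = 1 := by
    intro A hA
    have h1 : (Y * A)ᵀ * (Y * A) = (n : ℝ) • (Aᵀ * (Sg * A)) := by
      rw [Matrix.transpose_mul, Matrix.mul_assoc, ← Matrix.mul_assoc Yᵀ Y A, hYtY,
        Matrix.smul_mul, Matrix.mul_smul]
    rw [hA] at h1
    exact (smul_right_injective _ hn' h1.symm)
  set c : ℝ := ((n : ℝ) / 2) * ((r : ℝ) - k) with hc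
  -- forward value computation
  have forward : ∀ (S : Mat p r) (A : Mat m r),
      (Y * A)ᵀ * (Y * A) = (n : ℝ) • (1 : Mat r r) →
      Matrix.trace ((Y - X * (S * (Aᵀ * Sg))) * G * (Y - X * (S * (Aᵀ * Sg)))ᵀ)
        = frobSq (Y * A - X * S) + (n : ℝ) * k - (n : ℝ) * r := by
    intro S A hA
    have hBfGY : X * (S * (Aᵀ * Sg)) * G * Yᵀ = X * S * (Y * A)ᵀ := by
      simp only [Matrix.mul_assoc, Matrix.transpose_mul]
      rw [hSGYt]
    have hBfGBf : X * (S * (Aᵀ * Sg)) * G * (X * (S * (Aᵀ * Sg)))ᵀ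
        = X * (S * Sᵀ) * Xᵀ := by
      simp only [Matrix.transpose_mul, Matrix.transpose_smul, hS,
        Matrix.transpose_transpose, Matrix.mul_assoc]
      rw [show Sg * (G * (Sg * (A * (Sᵀ * Xᵀ)))) = (Sg * G * Sg) * (A * (Sᵀ * Xᵀ)) from by
        simp only [Matrix.mul_assoc], hG1]
      rw [show Sg * (A * (Sᵀ * Xᵀ)) = (Sg * A) * (Sᵀ * Xᵀ) from by
        simp only [Matrix.mul_assoc]]
      rw [show Aᵀ * (Sg * A * (Sᵀ * Xᵀ)) = (Aᵀ * (Sg * A)) * (Sᵀ * Xᵀ) from by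
        simp only [Matrix.mul_assoc], hASA A hA, Matrix.one_mul]
    rw [trace_quad Y (X * (S * (Aᵀ * Sg))) G hGs, hBfGY, hBfGBf, trace_prod_sym X S]
    have hfrob : frobSq (Y * A - X * S)
        = (n : ℝ) * r - 2 * Matrix.trace ((X * S) * (Y * A)ᵀ) + frobSq (X * S) := by
      have h2 := trace_quad (Y * A) (X * S) (1 : Mat r r) (Matrix.transpose_one)
      rw [Matrix.mul_one, Matrix.mul_one, Matrix.mul_one] at h2
      rw [frobSq_eq_trace, h2, ← frobSq_eq_trace, ← frobSq_eq_trace,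
        hgramtrace Y A hA]
    rw [hfrob, hYGY]
    ring
  -- sets
  set L := {v : ℝ | ∃ (S : Mat p r) (A : Mat m r),
      (Y * A)ᵀ * (Y * A) = (n : ℝ) • (1 : Mat r r) ∧ ρ r S ≤ q ∧
      v = frobSq (Y * A - X * S) / 2} with hL
  set R := {v : ℝ | ∃ B : Mat p m, B.rank ≤ r ∧ ρ m B ≤ q ∧
      v = Matrix.trace ((Y - X * B) * G * (Y - X * B)ᵀ) / 2} with hR
  have hcast : ((k - r : ℕ) : ℝ) = (k : ℝ) - r := Nat.cast_sub hr
  have hLR : L = (fun w => w + c) '' R := by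
    ext v
    constructor
    · rintro ⟨S, A, hA, hρS, rfl⟩
      refine ⟨Matrix.trace ((Y - X * (S * (Aᵀ * Sg))) * G
          * (Y - X * (S * (Aᵀ * Sg)))ᵀ) / 2,
        ⟨S * (Aᵀ * Sg), ?_, le_trans (hρmul S _) hρS, rfl⟩, ?_⟩
      · exact le_trans (Matrix.rank_mul_le_left S _) (Matrix.rank_le_width S)
      · rw [forward S A hA, hc]
        ring
    · rintro ⟨w, ⟨B, hBr, hρB, rfl⟩, rfl⟩
      obtain ⟨A, V, hA, hV, hGdecB, hBV⟩ :=
        exists_frames hn hr1 Y G B hr hBr hG1 hG2 hG3 hG4 hGs hYE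
      refine ⟨B * A, A, hA, le_trans (hρmul B A) hρB, ?_⟩
      have hMA : Y * A - X * (B * A) = (Y - X * B) * A := by
        rw [Matrix.sub_mul, ← Matrix.mul_assoc]
      have hsplit := traceG_split (Y - X * B) G A V hGdecB
      have hMV : (Y - X * B) * V = Y * V := by
        rw [Matrix.sub_mul, Matrix.mul_assoc, hBV, Matrix.mul_zero, sub_zero]
      have hfv : frobSq ((Y - X * B) * V) = (n : ℝ) * ((k - r : ℕ) : ℝ) := by
        rw [hMV]; exact hgramtrace Y V hV
      rw [hMA, hc]
      rw [hfv, hcast] at hsplit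
      linarith [hsplit]
  have hRne : R.Nonempty := by
    refine ⟨_, ⟨0, by rw [Matrix.rank_zero]; omega, hρ0, rfl⟩⟩
  have hRbdd : BddBelow R := by
    refine ⟨0, ?_⟩
    rintro w ⟨B, hB1, hB2, rfl⟩
    have h1 := frobSq_nonneg ((Y - X * B) * A₀)
    have h2 := frobSq_nonneg ((Y - X * B) * V₀)
    have h3 := traceG_split (Y - X * B) G A₀ V₀ hGdec
    linarith
  rw [hLR, sInf_image_add R c hRne hRbdd]

lemma distinctRows_zero_le {a b : ℕ} : distinctRows (0 : Mat a b) ≤ 1 := by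
  have h : (Set.range fun i : Fin a => (0 : Mat a b) i) ⊆ {0} := by
    rintro x ⟨i, rfl⟩
    show (0 : Mat a b) i ∈ ({0} : Set (Fin b → ℝ))
    have : (0 : Mat a b) i = 0 := by funext j; simp
    simp [this]
  calc distinctRows (0 : Mat a b) ≤ Set.ncard ({0} : Set (Fin b → ℝ)) :=
        Set.ncard_le_ncard h (Set.finite_singleton _)
    _ = 1 := Set.ncard_singleton _

lemma nonzeroRows_zero {a b : ℕ} : nonzeroRows (0 : Mat a b) = 0 := by
  unfold nonzeroRows
  have h : {i : Fin a | (0 : Mat a b) i ≠ 0} = (∅ : Set (Fin a)) := by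
    ext i
    simp only [Set.mem_setOf_eq, Set.mem_empty_iff_false, iff_false, not_not]
    funext j
    simp
  rw [h, Set.ncard_empty]

/-- **Equivalence of the projected (canonical-correlation-type) form of CRL and weighted
reduced-rank regression.** With `Σ_Y = YᵀY/n` and `G` its Moore–Penrose inverse,
`inf {½‖YA - XS‖_F² : (YA)ᵀYA = nI, ‖S‖_{2,C} ≤ q}
 = inf {½Tr((Y-XB)G(Y-XB)ᵀ) : rank B ≤ r, ‖B‖_{2,C} ≤ q} + (n/2)(r - rank Y)`,
and likewise with the `(2,C)` constraints replaced by row-sparsity constraints. -/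
theorem projected_crl_eq_weighted_rrr
    (n p m r q : ℕ) (X : Mat n p) (Y : Mat n m) (G : Mat m m)
    (hr1 : 1 ≤ r) (hr : r ≤ Y.rank) (hq1 : 1 ≤ q) (hq : q ≤ p)
    (hG1 : ((1 / (n : ℝ)) • (Yᵀ * Y)) * G * ((1 / (n : ℝ)) • (Yᵀ * Y))
        = (1 / (n : ℝ)) • (Yᵀ * Y))
    (hG2 : G * ((1 / (n : ℝ)) • (Yᵀ * Y)) * G = G)
    (hG3 : (((1 / (n : ℝ)) • (Yᵀ * Y)) * G)ᵀ = ((1 / (n : ℝ)) • (Yᵀ * Y)) * G)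
    (hG4 : (G * ((1 / (n : ℝ)) • (Yᵀ * Y)))ᵀ = G * ((1 / (n : ℝ)) • (Yᵀ * Y))) :
    (sInf {v : ℝ | ∃ (S : Mat p r) (A : Mat m r),
        (Y * A)ᵀ * (Y * A) = (n : ℝ) • (1 : Mat r r) ∧ distinctRows S ≤ q ∧
        v = frobSq (Y * A - X * S) / 2}
      = sInf {v : ℝ | ∃ B : Mat p m, B.rank ≤ r ∧ distinctRows B ≤ q ∧
          v = Matrix.trace ((Y - X * B) * G * (Y - X * B)ᵀ) / 2}
        + ((n : ℝ) / 2) * ((r : ℝ) - Y.rank)) ∧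
    (sInf {v : ℝ | ∃ (S : Mat p r) (A : Mat m r),
        (Y * A)ᵀ * (Y * A) = (n : ℝ) • (1 : Mat r r) ∧ nonzeroRows S ≤ q ∧
        v = frobSq (Y * A - X * S) / 2}
      = sInf {v : ℝ | ∃ B : Mat p m, B.rank ≤ r ∧ nonzeroRows B ≤ q ∧
          v = Matrix.trace ((Y - X * B) * G * (Y - X * B)ᵀ) / 2}
        + ((n : ℝ) / 2) * ((r : ℝ) - Y.rank)) := by
  constructor
  · exact key X Y G hr1 hr hG1 hG2 hG3 hG4 (fun l M => distinctRows M)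
      (fun M N => distinctRows_mul_le M N) (le_trans distinctRows_zero_le hq1)
  · exact key X Y G hr1 hr hG1 hG2 hG3 hG4 (fun l M => nonzeroRows M)
      (fun M N => nonzeroRows_mul_le M N) (le_trans (le_of_eq nonzeroRows_zero) (Nat.zero_le q))
end
end
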